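/- Let D ≥ 1 and N ≥ 1 be integers, let η > 0, and for j = 1, …, N let w_j ∈ ℝ^D with all coordinates strictly positive and g_j ∈ ℝ^D. Then the function F(z) = Σ_{j=1}^N (η·⟨g_j, z − w_j⟩ + Σ_{d=1}^D z_d·ln z_d − Σ_{d=1}^D (w_j)_d·ln (w_j)_d − ⟨ln w_j + 1, z − w_j⟩), defined for z ∈ ℝ^D with all coordinates strictly positive (where ln w_j and 1 denote the coordinatewise logarithm and the all-ones vector), attains its unique minimum over the positive orthant at the point z* whose d-th coordinate is z*_d = (∏_{j=1}^N (w_j)_d·e^{−η·(g_j)_d})^{1/N}. -/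

import Mathlib

/-- Entropy-type convexity inequality: for positive `s,t`,
`(log s + 1)(t - s) ≤ t log t - s log s`, strict unless `t = s`. -/
lemma entropy_key (s t : ℝ) (hs : 0 < s) (ht : 0 < t) :
    (Real.log s + 1) * (t - s) ≤ t * Real.log t - s * Real.log s := by
  have h := Real.log_le_sub_one_of_pos (div_pos hs ht)
  rw [Real.log_div hs.ne' ht.ne'] at h
  have h2 : t * (Real.log s - Real.log t) ≤ t * (s / t - 1) :=
    mul_le_mul_of_nonneg_left h ht.le
  have h3 : t * (s / t - 1) = s - t := by field_simp
  nlinarith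

lemma entropy_key_strict (s t : ℝ) (hs : 0 < s) (ht : 0 < t) (hne : t ≠ s) :
    (Real.log s + 1) * (t - s) < t * Real.log t - s * Real.log s := by
  have hst : s / t ≠ 1 := by
    intro h; exact hne ((div_eq_one_iff_eq ht.ne').mp h).symm
  have h := Real.log_lt_sub_one_of_pos (div_pos hs ht) hst
  rw [Real.log_div hs.ne' ht.ne'] at h
  have h2 : t * (Real.log s - Real.log t) < t * (s / t - 1) :=
    mul_lt_mul_of_pos_left h ht
  have h3 : t * (s / t - 1) = s - t := by field_simp
  nlinarith

/-- Closed-form update rule of Distributed Online Exponentiated Gradient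
(DOEG): with the unnormalized relative entropy as proximity function, the joint
mirror-descent objective attains its unique minimum over the positive orthant
at the coordinatewise geometric mean `z*_d = (∏_j (w_j)_d e^{-η (g_j)_d})^{1/N}`. -/
theorem stmt_15 (D N : ℕ) (hD : 1 ≤ D) (hN : 1 ≤ N) (η : ℝ) (hη : 0 < η)
    (w g : Fin N → Fin D → ℝ) (hw : ∀ j d, 0 < w j d)
    (F : (Fin D → ℝ) → ℝ)
    (hF : ∀ z, F z = ∑ j, (η * ∑ d, g j d * (z d - w j d)
        + ∑ d, z d * Real.log (z d) - ∑ d, w j d * Real.log (w j d)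
        - ∑ d, (Real.log (w j d) + 1) * (z d - w j d)))
    (zs : Fin D → ℝ)
    (hzs : ∀ d, zs d = (∏ j, w j d * Real.exp (-η * g j d)) ^ (1 / (N : ℝ))) :
    (∀ d, 0 < zs d) ∧
    (∀ z : Fin D → ℝ, (∀ d, 0 < z d) → F zs ≤ F z) ∧
    (∀ z : Fin D → ℝ, (∀ d, 0 < z d) → z ≠ zs → F zs < F z) := by
  have hNR : (0:ℝ) < N := by exact_mod_cast hN
  have hP : ∀ d, 0 < ∏ j, w j d * Real.exp (-η * g j d) := fun d =>
    Finset.prod_pos (fun j _ => mul_pos (hw j d) (Real.exp_pos _))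
  have hzs0 : ∀ d, 0 < zs d := fun d => by
    rw [hzs d]; exact Real.rpow_pos_of_pos (hP d) _
  -- logarithm of zs
  have hlog : ∀ d, (N:ℝ) * Real.log (zs d) = ∑ j, (Real.log (w j d) - η * g j d) := by
    intro d
    rw [hzs d, Real.log_rpow (hP d),
      Real.log_prod (fun j _ => (mul_pos (hw j d) (Real.exp_pos _)).ne')]
    rw [show ∀ x : ℝ, (N:ℝ) * (1 / N * x) = x from fun x => by field_simp]
    refine Finset.sum_congr rfl fun j _ => ?_
    rw [Real.log_mul (hw j d).ne' (Real.exp_pos _).ne', Real.log_exp]; ring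
  -- the difference identity
  have hdiff : ∀ z : Fin D → ℝ,
      F z - F zs = ∑ d, (N:ℝ) *
        ((z d * Real.log (z d) - zs d * Real.log (zs d))
          - (Real.log (zs d) + 1) * (z d - zs d)) := by
    intro z
    have e : Fin N → Fin D → ℝ := fun j d =>
      (η * g j d - Real.log (w j d) - 1) * (z d - zs d)
        + (z d * Real.log (z d) - zs d * Real.log (zs d))
    calc F z - F zs
        = ∑ j, ∑ d, ((η * g j d - Real.log (w j d) - 1) * (z d - zs d)
            + (z d * Real.log (z d) - zs d * Real.log (zs d))) := by
          rw [hF z, hF zs, ← Finset.sum_sub_distrib]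
          refine Finset.sum_congr rfl fun j _ => ?_
          simp only [Finset.mul_sum, ← Finset.sum_sub_distrib, ← Finset.sum_add_distrib]
          refine Finset.sum_congr rfl fun d _ => ?_
          ring
      _ = ∑ d, ∑ j, ((η * g j d - Real.log (w j d) - 1) * (z d - zs d)
            + (z d * Real.log (z d) - zs d * Real.log (zs d))) := Finset.sum_comm
      _ = _ := by
          refine Finset.sum_congr rfl fun d _ => ?_
          have hA : ∑ j : Fin N, (η * g j d - Real.log (w j d) - 1)
              = -((N:ℝ) * Real.log (zs d)) - N := by
            have h1 := hlog d
            have h2 : ∑ j : Fin N, (η * g j d - Real.log (w j d) - 1)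
                = -(∑ j, (Real.log (w j d) - η * g j d)) - ∑ j : Fin N, (1:ℝ) := by
              simp [Finset.sum_sub_distrib, ← Finset.sum_neg_distrib]
            rw [h2, h1]
            simp [Finset.sum_const, Finset.card_univ]
          rw [Finset.sum_add_distrib, ← Finset.sum_mul, hA, Finset.sum_const,
            Finset.card_univ, Fintype.card_fin, nsmul_eq_mul]
          ring
  have hle : ∀ z : Fin D → ℝ, (∀ d, 0 < z d) → F zs ≤ F z := by
    intro z hz
    have : 0 ≤ F z - F zs := by
      rw [hdiff z]
      refine Finset.sum_nonneg fun d _ => mul_nonneg hNR.le ?_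
      have := entropy_key (zs d) (z d) (hzs0 d) (hz d)
      linarith
    linarith
  refine ⟨hzs0, hle, ?_⟩
  intro z hz hne
  have : 0 < F z - F zs := by
    rw [hdiff z]
    obtain ⟨d0, hd0⟩ : ∃ d, z d ≠ zs d := by
      by_contra h; push_neg at h; exact hne (funext h)
    refine Finset.sum_pos' (fun d _ => mul_nonneg hNR.le ?_) ⟨d0, Finset.mem_univ _, ?_⟩
    · have := entropy_key (zs d) (z d) (hzs0 d) (hz d); linarith
    · refine mul_pos hNR ?_
      have := entropy_key_strict (zs d0) (z d0) (hzs0 d0) (hz d0) hd0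
      linarith
  linarith
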